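/- There is a unique alternating permutation of length n maximizing inversion number over all alternating permutations of length n. For odd n it is (n-1, n, n-3, n-2, …, 4, 5, 2, 3, 1). -/

import Mathlib

open Finset

/-- `σ` (0-indexed) is an alternating permutation: `σ 0 < σ 1 > σ 2 < …`. -/
def IsAlternating {n : ℕ} (σ : Equiv.Perm (Fin n)) : Prop :=
  ∀ i j : Fin n, (j : ℕ) = (i : ℕ) + 1 →
    ((Even (i : ℕ) → σ i < σ j) ∧ (Odd (i : ℕ) → σ j < σ i))

/-- `k` (a 1-indexed value, `1 ≤ k ≤ n-1`) is a swap of `σ`: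
writing `i, j` for the 0-indexed values `k-1, k`, we have `σ⁻¹(k) < σ⁻¹(k+1) - 1`. -/
def IsSwap {n : ℕ} (σ : Equiv.Perm (Fin n)) (k : ℕ) : Prop :=
  ∃ i j : Fin n, (i : ℕ) + 1 = k ∧ (j : ℕ) = k ∧ ((σ.symm i : ℕ) + 1 < (σ.symm j : ℕ))

instance {n : ℕ} (σ : Equiv.Perm (Fin n)) : DecidablePred (IsSwap σ) := fun k => by
  unfold IsSwap; infer_instance

/-- The set of swaps of `σ` (as 1-indexed values). -/
def swapSet {n : ℕ} (σ : Equiv.Perm (Fin n)) : Finset ℕ :=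
  (Finset.range n).filter (fun k => IsSwap σ k)

/-- The number of swaps of `σ`. -/
def swapCount {n : ℕ} (σ : Equiv.Perm (Fin n)) : ℕ := (swapSet σ).card

/-- Number of inversions of `σ`. -/
def invNum {n : ℕ} (σ : Equiv.Perm (Fin n)) : ℕ :=
  (Finset.univ.filter (fun p : Fin n × Fin n => p.1 < p.2 ∧ σ p.2 < σ p.1)).card

/-- The vertex `v_k^σ` (for `0 ≤ k ≤ n`): all-ones minus the sum of `e_{σ⁻¹(m)}`
for the first `k` values `m`. -/
def vtx {n : ℕ} (σ : Equiv.Perm (Fin n)) (k : ℕ) : Fin n → ℕ :=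
  fun j => if (σ j : ℕ) < k then 0 else 1

/-- The vertex set `vert(σ) = {v_0^σ, …, v_n^σ}` of the simplex `Δ^σ`. -/
def vert {n : ℕ} (σ : Equiv.Perm (Fin n)) : Finset (Fin n → ℕ) :=
  (Finset.range (n + 1)).image (vtx σ)

/-- The exclusion set of `σ`: vertices `v_k^σ` with `k` a swap of `σ`. -/
def excl {n : ℕ} (σ : Equiv.Perm (Fin n)) : Finset (Fin n → ℕ) :=
  (((Finset.range (n + 1)).filter (fun k => IsSwap σ k))).image (vtx σ)

/-- `σ` swaps to `τ`: `τ` is obtained from `σ` by exchanging two consecutive values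
`i < j = i+1` (0-indexed) at a swap position. -/
def SwapsTo {n : ℕ} (σ τ : Equiv.Perm (Fin n)) : Prop :=
  ∃ i j : Fin n, (j : ℕ) = (i : ℕ) + 1 ∧ ((σ.symm i : ℕ) + 1 < (σ.symm j : ℕ)) ∧
    τ = Equiv.swap i j * σ

/-- The order relation of the zig-zag poset `Z_n` (0-indexed): even indices are minimal,
odd indices are maximal, and an even index lies below its odd neighbours. -/
def zigzagLE {n : ℕ} (i j : Fin n) : Prop :=
  i = j ∨ (Odd (j : ℕ) ∧ ((i : ℕ) + 1 = (j : ℕ) ∨ (i : ℕ) = (j : ℕ) + 1))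

/-- A (down-closed) order ideal of the zig-zag poset `Z_n`. -/
def IsOrderIdeal {n : ℕ} (I : Finset (Fin n)) : Prop :=
  ∀ i j : Fin n, zigzagLE i j → j ∈ I → i ∈ I

/-- The Euler zig-zag number: the number of alternating permutations of length `n`. -/
noncomputable def eulerZigzag (n : ℕ) : ℕ := Nat.card {σ : Equiv.Perm (Fin n) // IsAlternating σ}

/-- there is a unique alternating permutation of length `n` maximizing the
inversion number; for odd `n` it is `(n-1, n, n-3, n-2, …, 4, 5, 2, 3, 1)`
(here written 0-indexed). -/
def fmax (n : ℕ) (p : Fin n) : Fin n :=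
  ⟨if (p : ℕ) % 2 = 0 then n - (p : ℕ) - 2 else n - (p : ℕ), by
    have := p.isLt; split <;> omega⟩

lemma fmax_inj (n : ℕ) : Function.Injective (fmax n) := by
  intro p q h
  have hp := p.isLt; have hq := q.isLt
  have h' : (fmax n p : ℕ) = (fmax n q : ℕ) := congrArg Fin.val h
  simp only [fmax] at h'
  apply Fin.ext
  split_ifs at h' <;> omega

noncomputable def σmax (n : ℕ) : Equiv.Perm (Fin n) :=
  Equiv.ofBijective (fmax n) (Finite.injective_iff_bijective.mp (fmax_inj n))

lemma σmax_apply (n : ℕ) (p : Fin n) : σmax n p = fmax n p := rfl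

lemma fmax_lt_iff (n : ℕ) (i j : Fin n) (hij : i < j) :
    (fmax n i < fmax n j ↔ ((i:ℕ) % 2 = 0 ∧ (j : ℕ) = (i:ℕ) + 1)) := by
  have hi := i.isLt; have hj := j.isLt
  have hij' : (i : ℕ) < j := hij
  simp only [fmax, Fin.mk_lt_mk]
  split_ifs <;> omega

lemma σmax_alt (n : ℕ) : IsAlternating (σmax n) := by
  intro i j hj
  have hij : i < j := by exact Fin.lt_def.mpr (by omega)
  constructor
  · intro he
    exact (fmax_lt_iff n i j hij).mpr ⟨Nat.even_iff.mp he, hj⟩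
  · intro ho
    have h1 : ¬ (fmax n i < fmax n j) := by
      rw [fmax_lt_iff n i j hij]
      simp [Nat.odd_iff.mp ho]
    have h2 : fmax n i ≠ fmax n j := fun h => absurd (fmax_inj n h) (by
      intro h'; rw [h'] at hj; omega)
    exact lt_of_le_of_ne (le_of_not_gt h1) (Ne.symm h2)

def ascSet {n : ℕ} (σ : Equiv.Perm (Fin n)) : Finset (Fin n × Fin n) :=
  Finset.univ.filter (fun p : Fin n × Fin n => p.1 < p.2 ∧ σ p.1 < σ p.2)

lemma invNum_add_asc {n : ℕ} (σ : Equiv.Perm (Fin n)) :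
    invNum σ + (ascSet σ).card
      = (Finset.univ.filter (fun p : Fin n × Fin n => p.1 < p.2)).card := by
  rw [invNum, ascSet]
  have h1 : (Finset.univ.filter (fun p : Fin n × Fin n => p.1 < p.2 ∧ σ p.2 < σ p.1))
      = (Finset.univ.filter (fun p : Fin n × Fin n => p.1 < p.2)).filter
        (fun p => σ p.2 < σ p.1) := by rw [Finset.filter_filter]
  have h2 : (Finset.univ.filter (fun p : Fin n × Fin n => p.1 < p.2 ∧ σ p.1 < σ p.2))
      = (Finset.univ.filter (fun p : Fin n × Fin n => p.1 < p.2)).filter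
        (fun p => ¬ σ p.2 < σ p.1) := by
    rw [Finset.filter_filter]
    apply Finset.filter_congr
    intro p _
    constructor
    · rintro ⟨h, h'⟩; exact ⟨h, not_lt.mpr (le_of_lt h')⟩
    · rintro ⟨h, h'⟩
      refine ⟨h, lt_of_le_of_ne (not_lt.mp h') ?_⟩
      intro hc
      exact absurd (σ.injective hc) (ne_of_lt h)
  rw [h1, h2, Finset.card_filter_add_card_filter_not]

lemma ascSet_σmax (n : ℕ) : ascSet (σmax n) =
    Finset.univ.filter (fun p : Fin n × Fin n =>
      (p.1:ℕ) % 2 = 0 ∧ (p.2:ℕ) = (p.1:ℕ) + 1) := by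
  unfold ascSet
  apply Finset.filter_congr
  intro p _
  constructor
  · rintro ⟨h, h'⟩
    exact (fmax_lt_iff n p.1 p.2 h).mp h'
  · rintro ⟨h, h'⟩
    have hlt : p.1 < p.2 := Fin.lt_def.mpr (by omega)
    exact ⟨hlt, (fmax_lt_iff n p.1 p.2 hlt).mpr ⟨h, h'⟩⟩

lemma asc_subset_of_alt {n : ℕ} (τ : Equiv.Perm (Fin n)) (hτ : IsAlternating τ) :
    ascSet (σmax n) ⊆ ascSet τ := by
  rw [ascSet_σmax]
  intro p hp
  simp only [Finset.mem_filter, Finset.mem_univ, true_and] at hp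
  obtain ⟨h1, h2⟩ := hp
  simp only [ascSet, Finset.mem_filter, Finset.mem_univ, true_and]
  exact ⟨Fin.lt_def.mpr (by omega), (hτ p.1 p.2 h2).1 (Nat.even_iff.mpr h1)⟩

lemma invNum_le_σmax {n : ℕ} (τ : Equiv.Perm (Fin n)) (hτ : IsAlternating τ) :
    invNum τ ≤ invNum (σmax n) := by
  have h := invNum_add_asc τ
  have h' := invNum_add_asc (σmax n)
  have hc := Finset.card_le_card (asc_subset_of_alt τ hτ)
  omega

lemma eq_σmax_of_max {n : ℕ} (τ : Equiv.Perm (Fin n)) (hτ : IsAlternating τ)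
    (hm : invNum (σmax n) ≤ invNum τ) : τ = σmax n := by
  -- ascSet τ = ascSet σmax
  have h := invNum_add_asc τ
  have h' := invNum_add_asc (σmax n)
  have hsub := asc_subset_of_alt τ hτ
  have hcard : (ascSet τ).card ≤ (ascSet (σmax n)).card := by omega
  have heq : ascSet (σmax n) = ascSet τ :=
    Finset.eq_of_subset_of_card_le hsub hcard
  -- same relative order
  have hrel : ∀ i j : Fin n, i < j → (τ i < τ j ↔ σmax n i < σmax n j) := by
    intro i j hij
    constructor
    · intro hlt
      by_contra hc
      have hmem : (i, j) ∉ ascSet (σmax n) := by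
        simp [ascSet, hc]
      rw [heq] at hmem
      exact hmem (by simp [ascSet, hij, hlt])
    · intro hlt
      have hmem : (i, j) ∈ ascSet (σmax n) := by simp [ascSet, hij, hlt]
      rw [heq] at hmem
      simp only [ascSet, Finset.mem_filter] at hmem
      exact hmem.2.2
  -- strict mono of σmax ∘ τ⁻¹
  have hmono : StrictMono (fun a => σmax n (τ.symm a)) := by
    intro a b hab
    set i := τ.symm a with hi
    set j := τ.symm b with hj
    have hti : τ i = a := τ.apply_symm_apply a
    have htj : τ j = b := τ.apply_symm_apply b
    rcases lt_trichotomy i j with h | h | h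
    · exact (hrel i j h).mp (by rw [hti, htj]; exact hab)
    · exfalso; rw [h, htj] at hti; exact absurd hti (ne_of_gt hab)
    · -- j < i; τ j = b > a = τ i, so ¬ τ j < τ i, so ¬ σ j < σ i, and σ j ≠ σ i
      have hnlt : ¬ τ j < τ i := by rw [hti, htj]; exact not_lt.mpr (le_of_lt hab)
      have hns : ¬ σmax n j < σmax n i := fun hc => hnlt ((hrel j i h).mpr hc)
      have hne : σmax n j ≠ σmax n i := fun hc =>
        absurd ((σmax n).injective hc) (ne_of_lt h)
      exact lt_of_le_of_ne (not_lt.mp hns) (Ne.symm hne)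
  have hrange : Set.range (fun a => σmax n (τ.symm a)) = Set.range (id : Fin n → Fin n) := by
    rw [Set.range_id]
    exact Set.range_eq_univ.mpr (((σmax n).surjective).comp τ.symm.surjective)
  have hid : (fun a => σmax n (τ.symm a)) = id :=
    (hmono.range_inj strictMono_id).mp hrange
  refine Equiv.ext fun x => ?_
  have := congrFun hid (τ x)
  simp only [Equiv.symm_apply_apply, id_eq] at this
  exact this.symm

theorem unique_max_inversion_alternating (n : ℕ) :
    (∃! σ : Equiv.Perm (Fin n), IsAlternating σ ∧
      ∀ τ : Equiv.Perm (Fin n), IsAlternating τ → invNum τ ≤ invNum σ) ∧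
    (Odd n → ∀ σ : Equiv.Perm (Fin n),
      (IsAlternating σ ∧ ∀ τ : Equiv.Perm (Fin n), IsAlternating τ → invNum τ ≤ invNum σ) →
      ∀ p : Fin n, (σ p : ℕ) =
        if (p : ℕ) % 2 = 0 then n - (p : ℕ) - 2 else n - (p : ℕ)) := by

  constructor
  · refine ⟨σmax n, ⟨σmax_alt n, fun τ hτ => invNum_le_σmax τ hτ⟩, ?_⟩
    rintro τ ⟨hτ, hmax⟩
    exact eq_σmax_of_max τ hτ (hmax (σmax n) (σmax_alt n))
  · rintro - σ ⟨hσ, hmax⟩ p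
    have hσm : σ = σmax n := eq_σmax_of_max σ hσ (hmax (σmax n) (σmax_alt n))
    rw [hσm]
    rfl
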